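/- Let R be a CDGA over ℚ, let Q be a differential graded R-module, and let f : Q → R be a morphism of differential graded R-modules (degree 0, R-linear, commuting with the differentials). Equip the mapping cone R ⊕_f sQ with the semi-trivial product. Suppose that either (1) f : Q → R is the inclusion of a differential ideal of R, with the R-module structure on Q given by multiplication in R, or (2) there exists p ∈ ℕ such that Q^i = 0 for all i < p and all i ≥ 2p. Then the semi-trivial product together with the mapping cone differential makes R ⊕_f sQ a CDGA; in particular the product is associative, unital, graded commutative, and satisfies the Leibniz rule with respect to the mapping cone differential. -/

import Mathlib

set_option linter.unusedSectionVars false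
set_option maxHeartbeats 1000000
open DirectSum


/-- The mapping cone differential on `R ⊕ sQ` (identified with `R × Q`, where the
second component records the desuspended element):  `D(r, sq) = (d_R r + f q, −s(d_Q q))`. -/
def coneDifferential {R Q : Type} [Ring R] [Algebra ℚ R]
    [AddCommGroup Q] [Module ℚ Q] [Module R Q] [IsScalarTower ℚ R Q]
    (dR : R →ₗ[ℚ] R) (dQ : Q →ₗ[ℚ] Q) (f : Q →ₗ[R] R) : R × Q → R × Q :=
  fun u => (dR u.1 + f u.2, -(dQ u.2))


lemma sgn_congr {e₁ e₂ : ℤ} (h : Even e₁ ↔ Even e₂) : ((-1:ℚ))^e₁ = (-1:ℚ)^e₂ := by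
  rcases Int.even_or_odd e₁ with h1 | h1
  · rw [h1.neg_one_zpow, (h.mp h1).neg_one_zpow]
  · have h2 : Odd e₂ := by
      rcases Int.even_or_odd e₂ with h2 | h2
      · exact absurd (h.mpr h2) (Int.not_even_iff_odd.mpr h1)
      · exact h2
    rw [h1.neg_one_zpow, h2.neg_one_zpow]

lemma sgn_ne : ((-1:ℚ)) ≠ 0 := by norm_num

lemma sgn_add (a b : ℤ) : ((-1:ℚ))^(a+b) = (-1:ℚ)^a * (-1:ℚ)^b := zpow_add₀ sgn_ne a b

lemma sgn_smul_congr {M : Type*} [AddCommMonoid M] [Module ℚ M] {e₁ e₂ : ℤ} (x : M)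
    (h : Even e₁ ↔ Even e₂) : ((-1:ℚ))^e₁ • x = ((-1:ℚ))^e₂ • x := by rw [sgn_congr h]

section
variable {R Q : Type} [Ring R] [Algebra ℚ R]
  (𝒜 : ℤ → Submodule ℚ R) [GradedRing 𝒜]
  [AddCommGroup Q] [Module ℚ Q] [Module R Q] [IsScalarTower ℚ R Q]
  (𝒬 : ℤ → Submodule ℚ Q) [DirectSum.Decomposition 𝒬]

noncomputable def epsA : R →ₗ[ℚ] R :=
  (DirectSum.toModule ℚ ℤ R fun i => ((-1:ℚ)^i) • (𝒜 i).subtype) ∘ₗ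
    (DirectSum.decomposeLinearEquiv 𝒜).toLinearMap

lemma epsA_of_mem {i : ℤ} {r : R} (hr : r ∈ 𝒜 i) : epsA 𝒜 r = ((-1:ℚ)^i) • r := by
  simp only [epsA, LinearMap.comp_apply, LinearEquiv.coe_coe, decomposeLinearEquiv_apply,
    DirectSum.decompose_of_mem 𝒜 hr]
  rw [← DirectSum.lof_eq_of ℚ, DirectSum.toModule_lof]
  rfl

lemma epsA_one : epsA 𝒜 (1:R) = 1 := by
  rw [epsA_of_mem 𝒜 (SetLike.one_mem_graded 𝒜)]; norm_num

lemma epsA_mul (r r' : R) : epsA 𝒜 (r * r') = epsA 𝒜 r * epsA 𝒜 r' := by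
  induction r using DirectSum.Decomposition.inductionOn 𝒜 with
  | zero => simp
  | @homogeneous i m =>
    induction r' using DirectSum.Decomposition.inductionOn 𝒜 with
    | zero => simp
    | @homogeneous j m' =>
      rw [epsA_of_mem 𝒜 (SetLike.mul_mem_graded m.2 m'.2), epsA_of_mem 𝒜 m.2,
        epsA_of_mem 𝒜 m'.2, smul_mul_assoc, mul_smul_comm, smul_smul, sgn_add]
    | add x y hx hy => rw [mul_add, map_add, hx, hy, map_add, mul_add]
  | add x y hx hy => rw [add_mul, map_add, hx, hy, map_add, add_mul]

def smulQ (r : R) : Q →ₗ[ℚ] Q where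
  toFun := (r • ·)
  map_add' := smul_add r
  map_smul' := fun c q => smul_comm r c q

noncomputable def tauQ (r : R) : Q →ₗ[ℚ] Q :=
  (DirectSum.toModule ℚ ℤ Q fun j =>
      (smulQ (if Even j then r else epsA 𝒜 r)).comp (𝒬 j).subtype) ∘ₗ
    (DirectSum.decomposeLinearEquiv 𝒬).toLinearMap

lemma tauQ_of_mem {j : ℤ} {q : Q} (hq : q ∈ 𝒬 j) (r : R) :
    tauQ 𝒜 𝒬 r q = (if Even j then r else epsA 𝒜 r) • q := by
  simp only [tauQ, LinearMap.comp_apply, LinearEquiv.coe_coe, decomposeLinearEquiv_apply,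
    DirectSum.decompose_of_mem 𝒬 hq]
  rw [← DirectSum.lof_eq_of ℚ, DirectSum.toModule_lof]
  rfl

lemma tauQ_of_mem' {i j : ℤ} {r : R} {q : Q} (hr : r ∈ 𝒜 i) (hq : q ∈ 𝒬 j) :
    tauQ 𝒜 𝒬 r q = ((-1:ℚ)^(i*j)) • (r • q) := by
  rw [tauQ_of_mem 𝒜 𝒬 hq]
  split_ifs with h
  · rw [(h.mul_left i).neg_one_zpow, one_smul]
  · rw [epsA_of_mem 𝒜 hr, smul_assoc]
    exact sgn_smul_congr _ (by rw [Int.even_mul]; tauto)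

lemma tauQ_add_left (r r' : R) (q : Q) :
    tauQ 𝒜 𝒬 (r + r') q = tauQ 𝒜 𝒬 r q + tauQ 𝒜 𝒬 r' q := by
  induction q using DirectSum.Decomposition.inductionOn 𝒬 with
  | zero => simp
  | @homogeneous j m =>
    rw [tauQ_of_mem 𝒜 𝒬 m.2, tauQ_of_mem 𝒜 𝒬 m.2, tauQ_of_mem 𝒜 𝒬 m.2, map_add]
    split_ifs <;> rw [add_smul]
  | add x y hx hy => rw [map_add, map_add, map_add, hx, hy]; abel

lemma tauQ_smul_left (c : ℚ) (r : R) (q : Q) :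
    tauQ 𝒜 𝒬 (c • r) q = c • tauQ 𝒜 𝒬 r q := by
  induction q using DirectSum.Decomposition.inductionOn 𝒬 with
  | zero => simp
  | @homogeneous j m =>
    rw [tauQ_of_mem 𝒜 𝒬 m.2, tauQ_of_mem 𝒜 𝒬 m.2, map_smul]
    split_ifs <;> rw [smul_assoc]
  | add x y hx hy => rw [map_add, map_add, hx, hy, smul_add]

lemma tauQ_zero_left (q : Q) : tauQ 𝒜 𝒬 (0:R) q = 0 := by
  induction q using DirectSum.Decomposition.inductionOn 𝒬 with
  | zero => simp
  | @homogeneous j m =>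
    rw [tauQ_of_mem 𝒜 𝒬 m.2, map_zero]
    split_ifs <;> rw [zero_smul]
  | add x y hx hy => rw [map_add, hx, hy, add_zero]

lemma tauQ_one (q : Q) : tauQ 𝒜 𝒬 (1:R) q = q := by
  induction q using DirectSum.Decomposition.inductionOn 𝒬 with
  | zero => simp
  | @homogeneous j m =>
    rw [tauQ_of_mem 𝒜 𝒬 m.2, epsA_one]
    split_ifs <;> rw [one_smul]
  | add x y hx hy => rw [map_add, hx, hy]



variable (hcomm : ∀ (i j : ℤ) (r r' : R), r ∈ 𝒜 i → r' ∈ 𝒜 j →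
      r * r' = ((-1 : ℚ) ^ (i * j)) • (r' * r))
variable (hsmul_deg : ∀ (i j : ℤ) (r : R) (q : Q), r ∈ 𝒜 i → q ∈ 𝒬 j → r • q ∈ 𝒬 (i + j))

include hcomm hsmul_deg in
lemma tau_eps (a r : R) (q : Q) :
    tauQ 𝒜 𝒬 a (epsA 𝒜 r • q) = epsA 𝒜 r • tauQ 𝒜 𝒬 a q := by
  induction q using DirectSum.Decomposition.inductionOn 𝒬 with
  | zero => simp
  | @homogeneous j mq =>
    induction r using DirectSum.Decomposition.inductionOn 𝒜 with
    | zero => simp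
    | @homogeneous i mr =>
      induction a using DirectSum.Decomposition.inductionOn 𝒜 with
      | zero => rw [tauQ_zero_left, tauQ_zero_left, smul_zero]
      | @homogeneous k ma =>
        obtain ⟨a, ha⟩ := ma; obtain ⟨r, hr⟩ := mr; obtain ⟨q, hq⟩ := mq
        simp only
        rw [epsA_of_mem 𝒜 hr, smul_assoc, map_smul,
          tauQ_of_mem' 𝒜 𝒬 ha (hsmul_deg i j r q hr hq),
          tauQ_of_mem' 𝒜 𝒬 ha hq,
          ← mul_smul a r q, hcomm k i a r ha hr, smul_assoc, mul_smul,
          smul_assoc ((-1:ℚ)^i) r, smul_comm r ((-1:ℚ)^(k*j)) (a • q)]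
        simp only [smul_smul, ← sgn_add]
        exact sgn_smul_congr _ (by simp only [Int.even_add, Int.even_mul]; tauto)
      | add x y hx hy =>
        rw [tauQ_add_left, tauQ_add_left, hx, hy, smul_add]
    | add x y hx hy =>
      rw [map_add, add_smul, map_add, hx, hy, add_smul]
  | add x y hx hy =>
    rw [smul_add, map_add, map_add, hx, hy, smul_add]

include hcomm hsmul_deg in
lemma tau_tau (a b : R) (q : Q) :
    tauQ 𝒜 𝒬 a (tauQ 𝒜 𝒬 b q) = tauQ 𝒜 𝒬 (b * a) q := by
  induction q using DirectSum.Decomposition.inductionOn 𝒬 with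
  | zero => simp
  | @homogeneous j mq =>
    induction b using DirectSum.Decomposition.inductionOn 𝒜 with
    | zero => rw [tauQ_zero_left, map_zero, zero_mul, tauQ_zero_left]
    | @homogeneous i mb =>
      induction a using DirectSum.Decomposition.inductionOn 𝒜 with
      | zero => rw [tauQ_zero_left, mul_zero, tauQ_zero_left]
      | @homogeneous k ma =>
        obtain ⟨a, ha⟩ := ma; obtain ⟨b, hb⟩ := mb; obtain ⟨q, hq⟩ := mq
        simp only
        rw [tauQ_of_mem' 𝒜 𝒬 hb hq, map_smul,
          tauQ_of_mem' 𝒜 𝒬 ha (hsmul_deg i j b q hb hq),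
          tauQ_of_mem' 𝒜 𝒬 (SetLike.mul_mem_graded hb ha) hq,
          ← mul_smul a b q, hcomm k i a b ha hb, smul_assoc, mul_smul,
          ← mul_smul b a q]
        simp only [smul_smul, ← sgn_add]
        exact sgn_smul_congr _ (by simp only [Int.even_add, Int.even_mul]; tauto)
      | add x y hx hy =>
        rw [tauQ_add_left, hx, hy, mul_add, tauQ_add_left]
    | add x y hx hy =>
      rw [tauQ_add_left, map_add, hx, hy, add_mul, tauQ_add_left]
  | add x y hx hy =>
    rw [map_add, map_add, hx, hy, map_add]

lemma sgn_neg (e : ℤ) : -(((-1:ℚ))^e) = (-1:ℚ)^(e+1) := by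
  rw [sgn_add, zpow_one]; ring

lemma sgn_neg_smul {M : Type*} [AddCommGroup M] [Module ℚ M] (e : ℤ) (x : M) :
    -(((-1:ℚ))^e • x) = ((-1:ℚ))^(e+1) • x := by rw [← sgn_neg, neg_smul]

lemma sgn_sq_smul {M : Type*} [AddCommGroup M] [Module ℚ M] (e : ℤ) (x : M) :
    ((-1:ℚ))^e • ((-1:ℚ))^e • x = x := by
  rw [smul_smul, ← sgn_add, (Even.add_self e).neg_one_zpow, one_smul]

include hcomm hsmul_deg in
lemma key_comm (f : Q →ₗ[R] R)
    (hf_deg : ∀ (i : ℤ), ∀ q ∈ 𝒬 i, f q ∈ 𝒜 i)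
    (hcase : Function.Injective f ∨
      ∃ p : ℕ, ∀ i : ℤ, (i < (p : ℤ) ∨ 2 * (p : ℤ) ≤ i) → 𝒬 i = ⊥)
    (a b : ℤ) (q q' : Q) (hq : q ∈ 𝒬 a) (hq' : q' ∈ 𝒬 b) :
    f q • q' = ((-1:ℚ)^(a*b)) • (f q' • q) := by
  rcases hcase with hinj | ⟨p, hp⟩
  · apply hinj
    rw [map_smul, f.map_smul_of_tower, map_smul, smul_eq_mul, smul_eq_mul,
      hcomm b a (f q') (f q) (hf_deg b q' hq') (hf_deg a q hq), smul_smul, ← sgn_add,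
      (by rw [Int.even_add, Int.even_mul, Int.even_mul]; tauto : Even (a*b + b*a)).neg_one_zpow,
      one_smul]
  · by_cases h1 : (a < (p:ℤ) ∨ 2*(p:ℤ) ≤ a)
    · rw [hp a h1] at hq
      rw [(Submodule.mem_bot ℚ).mp hq]; simp
    · by_cases h2 : (b < (p:ℤ) ∨ 2*(p:ℤ) ≤ b)
      · rw [hp b h2] at hq'
        rw [(Submodule.mem_bot ℚ).mp hq']; simp
      · have hL : f q • q' ∈ 𝒬 (a + b) := hsmul_deg a b (f q) q' (hf_deg a q hq) hq'
        have hR : f q' • q ∈ 𝒬 (b + a) := hsmul_deg b a (f q') q (hf_deg b q' hq') hq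
        rw [hp (a+b) (Or.inr (by omega))] at hL
        rw [hp (b+a) (Or.inr (by omega))] at hR
        rw [(Submodule.mem_bot ℚ).mp hL, (Submodule.mem_bot ℚ).mp hR, smul_zero]

noncomputable def muST : R × Q → R × Q → R × Q :=
  fun u v => (u.1 * v.1, epsA 𝒜 u.1 • v.2 + tauQ 𝒜 𝒬 v.1 u.2)

lemma muST_apply (u v : R × Q) :
    muST 𝒜 𝒬 u v = (u.1 * v.1, epsA 𝒜 u.1 • v.2 + tauQ 𝒜 𝒬 v.1 u.2) := rfl

lemma mu_add_left (u v w : R × Q) : muST 𝒜 𝒬 (u + v) w = muST 𝒜 𝒬 u w + muST 𝒜 𝒬 v w := by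
  simp only [muST_apply, Prod.fst_add, Prod.snd_add, add_mul, map_add, add_smul,
    Prod.mk_add_mk, Prod.mk.injEq]
  exact ⟨trivial, by abel⟩

lemma mu_add_right (u v w : R × Q) : muST 𝒜 𝒬 u (v + w) = muST 𝒜 𝒬 u v + muST 𝒜 𝒬 u w := by
  simp only [muST_apply, Prod.fst_add, Prod.snd_add, mul_add, smul_add, tauQ_add_left,
    Prod.mk_add_mk, Prod.mk.injEq]
  exact ⟨trivial, by abel⟩

lemma mu_smul_left (c : ℚ) (u v : R × Q) : muST 𝒜 𝒬 (c • u) v = c • muST 𝒜 𝒬 u v := by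
  simp only [muST_apply, Prod.smul_fst, Prod.smul_snd, smul_mul_assoc, map_smul, smul_assoc,
    Prod.smul_mk, smul_add, Prod.mk.injEq]

lemma mu_smul_right (c : ℚ) (u v : R × Q) : muST 𝒜 𝒬 u (c • v) = c • muST 𝒜 𝒬 u v := by
  simp only [muST_apply, Prod.smul_fst, Prod.smul_snd, mul_smul_comm, tauQ_smul_left,
    Prod.smul_mk, smul_add, Prod.mk.injEq]
  exact ⟨trivial, by rw [smul_comm]⟩

lemma mu_one (u : R × Q) :
    muST 𝒜 𝒬 ((1:R), (0:Q)) u = u ∧ muST 𝒜 𝒬 u ((1:R), (0:Q)) = u := by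
  constructor
  · simp [muST_apply, epsA_one, tauQ_one]
  · simp [muST_apply, epsA_one, tauQ_one]

include hcomm hsmul_deg in
lemma mu_assoc (u v w : R × Q) :
    muST 𝒜 𝒬 (muST 𝒜 𝒬 u v) w = muST 𝒜 𝒬 u (muST 𝒜 𝒬 v w) := by
  simp only [muST_apply, Prod.mk.injEq]
  refine ⟨mul_assoc _ _ _, ?_⟩
  rw [map_add, epsA_mul, mul_smul, tau_eps 𝒜 𝒬 hcomm hsmul_deg,
    tau_tau 𝒜 𝒬 hcomm hsmul_deg, smul_add]
  abel

lemma mu_rr (r r' : R) : muST 𝒜 𝒬 (r, (0:Q)) (r', (0:Q)) = (r*r', (0:Q)) := by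
  simp [muST_apply]

lemma mu_rq {i : ℤ} (r : R) (q' : Q) (hr : r ∈ 𝒜 i) :
    muST 𝒜 𝒬 (r, (0:Q)) ((0:R), q') = ((0:R), ((-1:ℚ)^i) • (r • q')) := by
  simp [muST_apply, epsA_of_mem 𝒜 hr, smul_assoc]

lemma mu_qr {i j : ℤ} (q : Q) (r' : R) (hq : q ∈ 𝒬 j) (hr' : r' ∈ 𝒜 i) :
    muST 𝒜 𝒬 ((0:R), q) (r', (0:Q)) = ((0:R), ((-1:ℚ)^(i*j)) • (r' • q)) := by
  simp [muST_apply, tauQ_of_mem' 𝒜 𝒬 hr' hq]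

lemma mu_qq (q q' : Q) : muST 𝒜 𝒬 ((0:R), q) ((0:R), q') = 0 := by
  simp [muST_apply, tauQ_zero_left, Prod.mk_eq_zero]

include hcomm in
lemma mu_comm {i j : ℤ} (r r' : R) (q q' : Q)
    (hr : r ∈ 𝒜 i) (hq : q ∈ 𝒬 (i+1)) (hr' : r' ∈ 𝒜 j) (hq' : q' ∈ 𝒬 (j+1)) :
    muST 𝒜 𝒬 (r, q) (r', q') = ((-1:ℚ)^(i*j)) • muST 𝒜 𝒬 (r', q') (r, q) := by
  simp only [muST_apply, Prod.smul_mk, Prod.mk.injEq]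
  refine ⟨hcomm i j r r' hr hr', ?_⟩
  rw [epsA_of_mem 𝒜 hr, epsA_of_mem 𝒜 hr', tauQ_of_mem' 𝒜 𝒬 hr' hq, tauQ_of_mem' 𝒜 𝒬 hr hq',
    smul_assoc, smul_assoc, smul_add, smul_smul, smul_smul]
  rw [← sgn_add, ← sgn_add, add_comm (((-1:ℚ))^(i*j + j) • (r' • q))]
  congr 1
  · exact sgn_smul_congr _ (by simp only [Int.even_add, Int.even_mul]; tauto)
  · exact sgn_smul_congr _ (by simp only [Int.even_add, Int.even_mul]; tauto)

variable (dR : R →ₗ[ℚ] R) (dQ : Q →ₗ[ℚ] Q) (f : Q →ₗ[R] R)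

lemma coneD_add (u v : R × Q) : coneDifferential dR dQ f (u + v) =
    coneDifferential dR dQ f u + coneDifferential dR dQ f v := by
  simp only [coneDifferential, Prod.fst_add, Prod.snd_add, map_add, Prod.mk_add_mk,
    Prod.mk.injEq]
  constructor <;> abel

lemma coneD_zero : coneDifferential dR dQ f 0 = 0 := by
  simp [coneDifferential, Prod.mk_eq_zero]

lemma coneD_smul (c : ℚ) (u : R × Q) : coneDifferential dR dQ f (c • u) =
    c • coneDifferential dR dQ f u := by
  simp [coneDifferential, Prod.smul_fst, Prod.smul_snd, map_smul, f.map_smul_of_tower,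
    Prod.smul_mk, smul_add]

lemma coneD_sq (hdR_sq : ∀ r : R, dR (dR r) = 0) (hdQ_sq : ∀ q : Q, dQ (dQ q) = 0)
    (hf_chain : ∀ q : Q, dR (f q) = f (dQ q)) (u : R × Q) :
    coneDifferential dR dQ f (coneDifferential dR dQ f u) = 0 := by
  simp [coneDifferential, Prod.mk_eq_zero, map_neg, hdR_sq, hdQ_sq, hf_chain]

include hcomm hsmul_deg in
lemma mu_leib_caseA
    (hdR_deg : ∀ (i : ℤ), ∀ r ∈ 𝒜 i, dR r ∈ 𝒜 (i + 1))
    (hleibR : ∀ (i : ℤ) (r r' : R), r ∈ 𝒜 i →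
      dR (r * r') = dR r * r' + ((-1 : ℚ) ^ i) • (r * dR r'))
    (hdQ_deg : ∀ (i : ℤ), ∀ q ∈ 𝒬 i, dQ q ∈ 𝒬 (i + 1))
    (hleibQ : ∀ (i : ℤ) (r : R) (q : Q), r ∈ 𝒜 i →
      dQ (r • q) = dR r • q + ((-1 : ℚ) ^ i) • (r • dQ q))
    (hf_deg : ∀ (i : ℤ), ∀ q ∈ 𝒬 i, f q ∈ 𝒜 i)
    {i : ℤ} {r : R} {q : Q} (hr : r ∈ 𝒜 i) (hq : q ∈ 𝒬 (i+1))
    {j : ℤ} {r' : R} (hr' : r' ∈ 𝒜 j) :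
    coneDifferential dR dQ f (muST 𝒜 𝒬 (r, q) (r', 0)) =
      muST 𝒜 𝒬 (coneDifferential dR dQ f (r, q)) (r', 0) +
        ((-1:ℚ)^i) • muST 𝒜 𝒬 (r, q) (coneDifferential dR dQ f (r', 0)) := by
  have hq2 : dQ q ∈ 𝒬 (i+2) := by
    have := hdQ_deg (i+1) q hq; rwa [show (i+1)+1 = i+2 by ring] at this
  have hdr' : dR r' ∈ 𝒜 (j+1) := hdR_deg j r' hr'
  simp only [muST_apply, coneDifferential, smul_zero, zero_add, map_zero, add_zero, neg_zero,
    Prod.smul_mk, Prod.mk_add_mk, Prod.mk.injEq]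
  constructor
  · rw [tauQ_of_mem' 𝒜 𝒬 hr' hq, f.map_smul_of_tower, map_smul, smul_eq_mul,
      hleibR i r r' hr, hcomm j (i+1) r' (f q) hr' (hf_deg _ q hq), sgn_sq_smul, add_mul]
    abel
  · rw [tauQ_of_mem' 𝒜 𝒬 hr' hq, map_smul, hleibQ j r' q hr',
      map_neg, tauQ_of_mem' 𝒜 𝒬 hr' hq2, tauQ_of_mem' 𝒜 𝒬 hdr' hq,
      smul_add, neg_add, sgn_neg_smul, smul_smul, smul_smul, ← sgn_add, ← sgn_add,
      sgn_neg_smul, sgn_neg_smul, add_comm (((-1:ℚ))^(j*(i+2)+1) • (r' • dQ q))]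
    congr 1
    · exact sgn_smul_congr _ (by simp only [Int.even_add, Int.even_mul]; tauto)
    · exact sgn_smul_congr _ (by simp only [Int.even_add, Int.even_mul]; tauto)

include hcomm hsmul_deg in
lemma mu_leib_caseB
    (hdR_deg : ∀ (i : ℤ), ∀ r ∈ 𝒜 i, dR r ∈ 𝒜 (i + 1))
    (hleibQ : ∀ (i : ℤ) (r : R) (q : Q), r ∈ 𝒜 i →
      dQ (r • q) = dR r • q + ((-1 : ℚ) ^ i) • (r • dQ q))
    (hf_deg : ∀ (i : ℤ), ∀ q ∈ 𝒬 i, f q ∈ 𝒜 i)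
    (hcase : Function.Injective f ∨
      ∃ p : ℕ, ∀ i : ℤ, (i < (p : ℤ) ∨ 2 * (p : ℤ) ≤ i) → 𝒬 i = ⊥)
    {i : ℤ} {r : R} {q : Q} (hr : r ∈ 𝒜 i) (hq : q ∈ 𝒬 (i+1))
    {l : ℤ} {q' : Q} (hq' : q' ∈ 𝒬 l) :
    coneDifferential dR dQ f (muST 𝒜 𝒬 (r, q) (0, q')) =
      muST 𝒜 𝒬 (coneDifferential dR dQ f (r, q)) (0, q') +
        ((-1:ℚ)^i) • muST 𝒜 𝒬 (r, q) (coneDifferential dR dQ f (0, q')) := by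
  have hkey : f q • q' = ((-1:ℚ)^((i+1)*l)) • (f q' • q) :=
    key_comm 𝒜 𝒬 hcomm hsmul_deg f hf_deg hcase (i+1) l q q' hq hq'
  simp only [muST_apply, coneDifferential, mul_zero, zero_add, map_zero, add_zero, neg_zero,
    zero_mul, tauQ_zero_left, map_neg, Prod.smul_mk, Prod.mk_add_mk, Prod.mk.injEq]
  constructor
  · rw [epsA_of_mem 𝒜 hr, smul_assoc, f.map_smul_of_tower, map_smul, smul_eq_mul]
  · rw [epsA_of_mem 𝒜 hr, smul_assoc, map_smul, hleibQ i r q' hr,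
      epsA_of_mem 𝒜 (Submodule.add_mem _ (hdR_deg i r hr) (hf_deg (i+1) q hq)),
      tauQ_of_mem' 𝒜 𝒬 (hf_deg l q' hq') hq]
    rw [smul_assoc ((-1:ℚ)^(i+1)) (dR r + f q) q', add_smul, hkey,
      smul_assoc ((-1:ℚ)^i) r (-(dQ q')), smul_neg r]
    simp only [smul_add, neg_add, smul_neg, smul_smul]
    rw [sgn_neg_smul i (dR r • q')]
    have hz : ((-1:ℚ)^(i+1) * (-1:ℚ)^((i+1)*l)) • (f q' • q) =
        -((((-1:ℚ)^i * (-1:ℚ)^(l*(i+1)))) • (f q' • q)) := by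
      rw [← sgn_add, ← sgn_add, sgn_neg_smul]
      exact sgn_smul_congr _ (by simp only [Int.even_add, Int.even_mul]; tauto)
    rw [hz]
    abel

include hcomm hsmul_deg in
lemma mu_leibniz
    (hdR_deg : ∀ (i : ℤ), ∀ r ∈ 𝒜 i, dR r ∈ 𝒜 (i + 1))
    (hleibR : ∀ (i : ℤ) (r r' : R), r ∈ 𝒜 i →
      dR (r * r') = dR r * r' + ((-1 : ℚ) ^ i) • (r * dR r'))
    (hdQ_deg : ∀ (i : ℤ), ∀ q ∈ 𝒬 i, dQ q ∈ 𝒬 (i + 1))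
    (hleibQ : ∀ (i : ℤ) (r : R) (q : Q), r ∈ 𝒜 i →
      dQ (r • q) = dR r • q + ((-1 : ℚ) ^ i) • (r • dQ q))
    (hf_deg : ∀ (i : ℤ), ∀ q ∈ 𝒬 i, f q ∈ 𝒜 i)
    (hcase : Function.Injective f ∨
      ∃ p : ℕ, ∀ i : ℤ, (i < (p : ℤ) ∨ 2 * (p : ℤ) ≤ i) → 𝒬 i = ⊥)
    {i : ℤ} {r : R} {q : Q} (hr : r ∈ 𝒜 i) (hq : q ∈ 𝒬 (i+1)) (v : R × Q) :
    coneDifferential dR dQ f (muST 𝒜 𝒬 (r, q) v) =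
      muST 𝒜 𝒬 (coneDifferential dR dQ f (r, q)) v +
        ((-1:ℚ)^i) • muST 𝒜 𝒬 (r, q) (coneDifferential dR dQ f v) := by
  have hu : True := trivial
  have Padd : ∀ a b : R × Q,
      (coneDifferential dR dQ f (muST 𝒜 𝒬 (r, q) a) = muST 𝒜 𝒬 (coneDifferential dR dQ f (r, q)) a + ((-1:ℚ)^i) • muST 𝒜 𝒬 (r, q) (coneDifferential dR dQ f a)) →
      (coneDifferential dR dQ f (muST 𝒜 𝒬 (r, q) b) = muST 𝒜 𝒬 (coneDifferential dR dQ f (r, q)) b + ((-1:ℚ)^i) • muST 𝒜 𝒬 (r, q) (coneDifferential dR dQ f b)) →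
      (coneDifferential dR dQ f (muST 𝒜 𝒬 (r, q) (a+b)) = muST 𝒜 𝒬 (coneDifferential dR dQ f (r, q)) (a+b) +
        ((-1:ℚ)^i) • muST 𝒜 𝒬 (r, q) (coneDifferential dR dQ f (a+b))) := by
    intro a b ha hb
    rw [mu_add_right, coneD_add dR dQ f (muST 𝒜 𝒬 (r,q) a) (muST 𝒜 𝒬 (r,q) b), ha, hb,
      coneD_add dR dQ f a b, mu_add_right, mu_add_right, smul_add]
    abel
  have Pzero : coneDifferential dR dQ f (muST 𝒜 𝒬 (r, q) 0) = muST 𝒜 𝒬 (coneDifferential dR dQ f (r, q)) 0 + ((-1:ℚ)^i) • muST 𝒜 𝒬 (r, q) (coneDifferential dR dQ f 0) := by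
    simp [muST_apply, coneDifferential, tauQ_zero_left, Prod.mk_eq_zero]
  have caseR : ∀ r' : R, coneDifferential dR dQ f (muST 𝒜 𝒬 (r, q) (r', 0)) =
      muST 𝒜 𝒬 (coneDifferential dR dQ f (r, q)) (r', 0) + ((-1:ℚ)^i) • muST 𝒜 𝒬 (r, q) (coneDifferential dR dQ f (r', 0)) := by
    intro r'
    induction r' using DirectSum.Decomposition.inductionOn 𝒜 with
    | zero =>
      have h0 : ((0:R), (0:Q)) = (0 : R × Q) := rfl
      rw [h0]; exact Pzero
    | @homogeneous j m =>
      exact mu_leib_caseA 𝒜 𝒬 hcomm hsmul_deg dR dQ f hdR_deg hleibR hdQ_deg hleibQ hf_deg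
        hr hq m.2
    | add x y hx hy =>
      have h1 : ((x + y : R), (0:Q)) = ((x, 0) : R × Q) + (y, 0) := by
        rw [Prod.mk_add_mk, add_zero]
      rw [h1]; exact Padd _ _ hx hy
  have caseQ : ∀ q' : Q, coneDifferential dR dQ f (muST 𝒜 𝒬 (r, q) ((0:R), q')) =
      muST 𝒜 𝒬 (coneDifferential dR dQ f (r, q)) ((0:R), q') + ((-1:ℚ)^i) • muST 𝒜 𝒬 (r, q) (coneDifferential dR dQ f ((0:R), q')) := by
    intro q'
    induction q' using DirectSum.Decomposition.inductionOn 𝒬 with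
    | zero =>
      have h0 : ((0:R), (0:Q)) = (0 : R × Q) := rfl
      rw [h0]; exact Pzero
    | @homogeneous l m =>
      exact mu_leib_caseB 𝒜 𝒬 hcomm hsmul_deg dR dQ f hdR_deg hleibQ hf_deg hcase
        hr hq m.2
    | add x y hx hy =>
      have h1 : ((0:R), x + y) = (((0:R), x) : R × Q) + ((0:R), y) := by
        rw [Prod.mk_add_mk, add_zero]
      rw [h1]; exact Padd _ _ hx hy
  have hv : v = (v.1, (0:Q)) + ((0:R), v.2) := by
    rw [Prod.mk_add_mk, add_zero, zero_add]
  rw [hv]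
  exact Padd _ _ (caseR v.1) (caseQ v.2)

end

/-- **The semi-trivial CDGA structure on a mapping cone** (Proposition 3.17 of the paper).

Let `R` be a CDGA over `ℚ` (a `ℚ`-algebra with a grading `𝒜 : ℤ → Submodule ℚ R`
concentrated in non-negative degrees, graded commutative, with a degree `+1`
differential `dR` squaring to zero and satisfying the Leibniz rule), let `Q` be a
differential graded `R`-module (grading `𝒬 : ℤ → Submodule ℚ Q`, differential `dQ`),
and let `f : Q → R` be a morphism of differential graded `R`-modules of degree `0`.

Suppose either (1) `f` is injective (so that `f` identifies `Q` with a differential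
ideal of `R`, with the `R`-module structure on `Q` given by multiplication in `R`), or
(2) there is `p ∈ ℕ` with `Qⁱ = 0` for `i < p` and for `i ≥ 2p`.

Then the semi-trivial product together with the mapping cone differential makes the
mapping cone `R ⊕_f sQ` (carrier `R × Q`, with `(r, q)` denoting `r + sq` and
homogeneous of cone degree `n` when `r ∈ 𝒜 n`, `q ∈ 𝒬 (n+1)`) a CDGA:  there is a
`ℚ`-bilinear product given on homogeneous elements by the semi-trivial formulas which
is associative, unital, graded commutative, and satisfies the Leibniz rule with respect
to the mapping cone differential (which squares to zero). -/
theorem semiTrivial_cdga_structure_on_mapping_cone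
    {R Q : Type} [Ring R] [Algebra ℚ R]
    (𝒜 : ℤ → Submodule ℚ R) [GradedRing 𝒜]
    (hconn : ∀ i : ℤ, i < 0 → 𝒜 i = ⊥)
    (hcomm : ∀ (i j : ℤ) (r r' : R), r ∈ 𝒜 i → r' ∈ 𝒜 j →
      r * r' = ((-1 : ℚ) ^ (i * j)) • (r' * r))
    (dR : R →ₗ[ℚ] R)
    (hdR_deg : ∀ (i : ℤ), ∀ r ∈ 𝒜 i, dR r ∈ 𝒜 (i + 1))
    (hdR_sq : ∀ r : R, dR (dR r) = 0)
    (hleibR : ∀ (i : ℤ) (r r' : R), r ∈ 𝒜 i →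
      dR (r * r') = dR r * r' + ((-1 : ℚ) ^ i) • (r * dR r'))
    [AddCommGroup Q] [Module ℚ Q] [Module R Q] [IsScalarTower ℚ R Q]
    (𝒬 : ℤ → Submodule ℚ Q) [DirectSum.Decomposition 𝒬]
    (hsmul_deg : ∀ (i j : ℤ) (r : R) (q : Q), r ∈ 𝒜 i → q ∈ 𝒬 j → r • q ∈ 𝒬 (i + j))
    (dQ : Q →ₗ[ℚ] Q)
    (hdQ_deg : ∀ (i : ℤ), ∀ q ∈ 𝒬 i, dQ q ∈ 𝒬 (i + 1))
    (hdQ_sq : ∀ q : Q, dQ (dQ q) = 0)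
    (hleibQ : ∀ (i : ℤ) (r : R) (q : Q), r ∈ 𝒜 i →
      dQ (r • q) = dR r • q + ((-1 : ℚ) ^ i) • (r • dQ q))
    (f : Q →ₗ[R] R)
    (hf_deg : ∀ (i : ℤ), ∀ q ∈ 𝒬 i, f q ∈ 𝒜 i)
    (hf_chain : ∀ q : Q, dR (f q) = f (dQ q))
    (hcase : Function.Injective f ∨
      ∃ p : ℕ, ∀ i : ℤ, (i < (p : ℤ) ∨ 2 * (p : ℤ) ≤ i) → 𝒬 i = ⊥) :
    ∃ mu : R × Q → R × Q → R × Q,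
      -- `ℚ`-bilinearity
      (∀ u v w, mu (u + v) w = mu u w + mu v w) ∧
      (∀ u v w, mu u (v + w) = mu u v + mu u w) ∧
      (∀ (c : ℚ) u v, mu (c • u) v = c • mu u v) ∧
      (∀ (c : ℚ) u v, mu u (c • v) = c • mu u v) ∧
      -- the semi-trivial product formulas on homogeneous elements
      (∀ r r' : R, mu (r, 0) (r', 0) = (r * r', 0)) ∧
      (∀ (i : ℤ) (r : R) (q' : Q), r ∈ 𝒜 i →
        mu (r, 0) ((0 : R), q') = (0, ((-1 : ℚ) ^ i) • (r • q'))) ∧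
      (∀ (i j : ℤ) (q : Q) (r' : R), q ∈ 𝒬 j → r' ∈ 𝒜 i →
        mu ((0 : R), q) (r', 0) = (0, ((-1 : ℚ) ^ (i * j)) • (r' • q))) ∧
      (∀ q q' : Q, mu ((0 : R), q) ((0 : R), q') = 0) ∧
      -- unit
      (∀ u, mu ((1 : R), (0 : Q)) u = u ∧ mu u ((1 : R), (0 : Q)) = u) ∧
      -- associativity
      (∀ u v w, mu (mu u v) w = mu u (mu v w)) ∧
      -- graded commutativity (for the cone grading)
      (∀ (i j : ℤ) (r r' : R) (q q' : Q),
        r ∈ 𝒜 i → q ∈ 𝒬 (i + 1) → r' ∈ 𝒜 j → q' ∈ 𝒬 (j + 1) →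
        mu (r, q) (r', q') = ((-1 : ℚ) ^ (i * j)) • mu (r', q') (r, q)) ∧
      -- Leibniz rule for the mapping cone differential
      (∀ (i : ℤ) (r : R) (q : Q) (v : R × Q), r ∈ 𝒜 i → q ∈ 𝒬 (i + 1) →
        coneDifferential dR dQ f (mu (r, q) v) =
          mu (coneDifferential dR dQ f (r, q)) v +
            ((-1 : ℚ) ^ i) • mu (r, q) (coneDifferential dR dQ f v)) ∧
      -- the mapping cone differential squares to zero
      (∀ u, coneDifferential dR dQ f (coneDifferential dR dQ f u) = 0) := by

  refine ⟨muST 𝒜 𝒬, mu_add_left 𝒜 𝒬, mu_add_right 𝒜 𝒬, mu_smul_left 𝒜 𝒬,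
    mu_smul_right 𝒜 𝒬, mu_rr 𝒜 𝒬,
    fun i r q' hr => mu_rq 𝒜 𝒬 r q' hr,
    fun i j q r' hq hr' => mu_qr 𝒜 𝒬 q r' hq hr',
    mu_qq 𝒜 𝒬, mu_one 𝒜 𝒬, mu_assoc 𝒜 𝒬 hcomm hsmul_deg,
    fun i j r r' q q' hr hq hr' hq' => mu_comm 𝒜 𝒬 hcomm r r' q q' hr hq hr' hq',
    fun i r q v hr hq => mu_leibniz 𝒜 𝒬 hcomm hsmul_deg dR dQ f hdR_deg hleibR hdQ_deg
      hleibQ hf_deg hcase hr hq v,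
    coneD_sq dR dQ f hdR_sq hdQ_sq hf_chain⟩
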